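/- Every finite multiset z of points in a metric space (with sufficiently small diameter relative to the convexity radius) admits a cluster decomposition: there exist confined, pairwise separated sub-multisets z₁, ..., z_m with z = z₁ + ... + z_m. -/

import Mathlib

/-- A clustering rule: sequences of positive reals `0 < r 1 < r 2 < ...` and
`0 = d 1 < d 2 < ...` with `r k > d k + r (k-1)` and `d k > 6 * r (k-1)` for `k ≥ 2`. -/
def ClusteringRule (r d : ℕ → ℝ) : Prop :=
  0 < r 1 ∧ d 1 = 0 ∧
  (∀ k, 1 ≤ k → r k < r (k + 1)) ∧
  (∀ k, 1 ≤ k → d k < d (k + 1)) ∧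
  (∀ k, 2 ≤ k → d k + r (k - 1) < r k) ∧
  (∀ k, 2 ≤ k → 6 * r (k - 1) < d k)

/-- The center of mass of a finite multiset of points in an inner product space. -/
noncomputable def centroid {V : Type*} [NormedAddCommGroup V] [InnerProductSpace ℝ V]
    (z : Multiset V) : V :=
  (z.card : ℝ)⁻¹ • z.sum

section Aux

lemma ClusteringRule.r_mono {r d : ℕ → ℝ} (h : ClusteringRule r d) :
    ∀ j k, 1 ≤ j → j ≤ k → r j ≤ r k := by
  intro j k hj hjk
  induction k with
  | zero => omega
  | succ n ih =>
    rcases Nat.lt_or_ge j (n+1) with hlt | hge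
    · have hn : j ≤ n := by omega
      have h1n : 1 ≤ n := by omega
      exact le_trans (ih hn) (le_of_lt (h.2.2.1 n h1n))
    · have : j = n + 1 := by omega
      subst this; rfl

lemma ClusteringRule.d_mono {r d : ℕ → ℝ} (h : ClusteringRule r d) :
    ∀ j k, 1 ≤ j → j ≤ k → d j ≤ d k := by
  intro j k hj hjk
  induction k with
  | zero => omega
  | succ n ih =>
    rcases Nat.lt_or_ge j (n+1) with hlt | hge
    · have hn : j ≤ n := by omega
      have h1n : 1 ≤ n := by omega
      exact le_trans (ih hn) (le_of_lt (h.2.2.2.1 n h1n))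
    · have : j = n + 1 := by omega
      subst this; rfl

lemma ClusteringRule.d_pos {r d : ℕ → ℝ} (h : ClusteringRule r d) {k : ℕ} (hk : 2 ≤ k) :
    0 < d k := by
  have h2 : d 1 < d 2 := h.2.2.2.1 1 le_rfl
  have := h.d_mono 2 k (by norm_num) hk
  have h1 := h.2.1
  linarith

variable {V : Type*} [NormedAddCommGroup V] [InnerProductSpace ℝ V]

lemma centroid_add_dist_left (a b : Multiset V) (ha : a ≠ 0) (hb : b ≠ 0) :
    dist (centroid (a + b)) (centroid a) ≤ dist (centroid a) (centroid b) := by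
  have hka : (0:ℝ) < (a.card : ℝ) := by
    exact_mod_cast Multiset.card_pos.mpr ha
  have hkb : (0:ℝ) < (b.card : ℝ) := by
    exact_mod_cast Multiset.card_pos.mpr hb
  have hk : (0:ℝ) < (a.card : ℝ) + (b.card : ℝ) := by linarith
  have hsa : a.sum = (a.card : ℝ) • centroid a := by
    rw [centroid, smul_smul, mul_inv_cancel₀ hka.ne', one_smul]
  have hsb : b.sum = (b.card : ℝ) • centroid b := by
    rw [centroid, smul_smul, mul_inv_cancel₀ hkb.ne', one_smul]
  have key : centroid (a + b) - centroid a
      = ((b.card : ℝ) / ((a.card : ℝ) + (b.card : ℝ))) • (centroid b - centroid a) := by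
    rw [centroid, Multiset.card_add, Multiset.sum_add, hsa, hsb]
    push_cast
    match_scalars <;> field_simp <;> ring
  rw [dist_eq_norm, key, norm_smul, dist_eq_norm, norm_sub_rev]
  have h1 : ‖(b.card : ℝ) / ((a.card : ℝ) + (b.card : ℝ))‖ ≤ 1 := by
    rw [Real.norm_eq_abs, abs_div, abs_of_pos hkb, abs_of_pos hk, div_le_one hk]
    linarith
  exact mul_le_of_le_one_left (norm_nonneg _) h1

lemma centroid_add_dist_right (a b : Multiset V) (ha : a ≠ 0) (hb : b ≠ 0) :
    dist (centroid (a + b)) (centroid b) ≤ dist (centroid a) (centroid b) := by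
  have h := centroid_add_dist_left b a hb ha
  rw [add_comm b a] at h
  exact h.trans_eq (dist_comm _ _)

/-- Merging two confined, non-separated pieces yields a confined piece. -/
lemma conf_merge {r d : ℕ → ℝ} (hrule : ClusteringRule r d) (a b : Multiset V)
    (ha : a ≠ 0) (hb : b ≠ 0)
    (hca : ∀ p ∈ a, dist p (centroid a) < r a.card)
    (hcb : ∀ p ∈ b, dist p (centroid b) < r b.card)
    (hnd : dist (centroid a) (centroid b) ≤ d (a.card + b.card)) :
    ∀ p ∈ a + b, dist p (centroid (a + b)) < r (a + b).card := by
  have hka : 1 ≤ a.card := by have := Multiset.card_pos.mpr ha; omega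
  have hkb : 1 ≤ b.card := by have := Multiset.card_pos.mpr hb; omega
  set k := a.card + b.card with hk
  have hk2 : 2 ≤ k := by omega
  have hcardab : (a + b).card = k := Multiset.card_add a b
  have hrk : d k + r (k - 1) < r k := hrule.2.2.2.2.1 k hk2
  intro p hp
  rw [hcardab]
  rcases Multiset.mem_add.mp hp with hpa | hpb
  · have h1 : dist p (centroid (a + b))
        ≤ dist p (centroid a) + dist (centroid (a + b)) (centroid a) := by
      rw [dist_comm (centroid (a + b)) (centroid a)]
      exact dist_triangle _ _ _
    have h2 := centroid_add_dist_left a b ha hb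
    have h3 : r a.card ≤ r (k - 1) := hrule.r_mono a.card (k - 1) hka (by omega)
    have := hca p hpa
    linarith
  · have h1 : dist p (centroid (a + b))
        ≤ dist p (centroid b) + dist (centroid (a + b)) (centroid b) := by
      rw [dist_comm (centroid (a + b)) (centroid b)]
      exact dist_triangle _ _ _
    have h2 := centroid_add_dist_right a b ha hb
    have h3 : r b.card ≤ r (k - 1) := hrule.r_mono b.card (k - 1) hkb (by omega)
    have := hcb p hpb
    linarith

/-- The merging induction: any collection of nonempty confined pieces can be
reorganized into nonempty confined pairwise-separated pieces with the same sum. -/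
lemma exists_sep {r d : ℕ → ℝ} (hrule : ClusteringRule r d) :
    ∀ (n : ℕ) (P : Multiset (Multiset V)), Multiset.card P = n →
    (∀ s ∈ P, s ≠ 0 ∧ ∀ p ∈ s, dist p (centroid s) < r s.card) →
    ∃ Q : Multiset (Multiset V), Q.sum = P.sum ∧
      (∀ s ∈ Q, s ≠ 0 ∧ ∀ p ∈ s, dist p (centroid s) < r s.card) ∧
      (∀ a b : Multiset V, a ::ₘ b ::ₘ 0 ≤ Q →
        d (a.card + b.card) < dist (centroid a) (centroid b)) := by
  intro n
  induction n using Nat.strong_induction_on with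
  | _ n ih =>
    intro P hcard hP
    by_cases hsep : ∀ a b : Multiset V, a ::ₘ b ::ₘ 0 ≤ P →
        d (a.card + b.card) < dist (centroid a) (centroid b)
    · exact ⟨P, rfl, hP, hsep⟩
    · push_neg at hsep
      obtain ⟨a, b, hab, hnd⟩ := hsep
      obtain ⟨R, hR⟩ := Multiset.le_iff_exists_add.mp hab
      have haP : a ∈ P := Multiset.mem_of_le hab (by simp)
      have hbP : b ∈ P := Multiset.mem_of_le hab (by simp)
      obtain ⟨ha0, hca⟩ := hP a haP
      obtain ⟨hb0, hcb⟩ := hP b hbP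
      set P' : Multiset (Multiset V) := (a + b) ::ₘ R with hP'
      have hcard' : Multiset.card P' < n := by
        have : Multiset.card P = 2 + Multiset.card R := by simp [hR]; omega
        simp only [hP', Multiset.card_cons]
        omega
      have hinv : ∀ s ∈ P', s ≠ 0 ∧ ∀ p ∈ s, dist p (centroid s) < r s.card := by
        intro s hs
        rcases Multiset.mem_cons.mp hs with hs | hs
        · subst hs
          constructor
          · simp [ha0]
          · exact conf_merge hrule a b ha0 hb0 hca hcb hnd
        · exact hP s (hR ▸ Multiset.mem_add.mpr (Or.inr hs))
      obtain ⟨Q, hQsum, hQinv, hQsep⟩ := ih _ hcard' P' rfl hinv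
      refine ⟨Q, ?_, hQinv, hQsep⟩
      rw [hQsum, hP', hR]
      simp [add_assoc, add_comm, add_left_comm]

end Aux

/-- Every nonempty finite multiset of points admits a cluster decomposition: confined,
pairwise separated pieces summing to `z`. -/
theorem exists_cluster_decomposition {V : Type*} [NormedAddCommGroup V]
    [InnerProductSpace ℝ V] (r d : ℕ → ℝ) (hrule : ClusteringRule r d)
    (z : Multiset V) (hz : z ≠ 0) :
    ∃ (m : ℕ) (Z : Fin m → Multiset V),
      (∀ i, Z i ≠ 0) ∧ (∑ i, Z i) = z ∧
      (∀ i, ∀ p ∈ Z i, dist p (centroid (Z i)) < r (Z i).card) ∧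
      (∀ i j, i ≠ j →
        d ((Z i).card + (Z j).card) < dist (centroid (Z i)) (centroid (Z j))) := by
  classical
  set P : Multiset (Multiset V) := z.map (fun p => ({p} : Multiset V)) with hPdef
  have hPsum : P.sum = z := by
    simp [hPdef]
  have hPinv : ∀ s ∈ P, s ≠ 0 ∧ ∀ p ∈ s, dist p (centroid s) < r s.card := by
    intro s hs
    obtain ⟨p, _, rfl⟩ := Multiset.mem_map.mp hs
    refine ⟨by simp, ?_⟩
    intro q hq
    rw [Multiset.mem_singleton.mp hq]
    have : centroid ({p} : Multiset V) = p := by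
      simp [centroid]
    simp [this, hrule.1]
  obtain ⟨Q, hQsum, hQinv, hQsep⟩ := exists_sep hrule (Multiset.card P) P rfl hPinv
  -- Q has no duplicates
  have hnodup : Q.Nodup := by
    rw [Multiset.nodup_iff_count_le_one]
    intro s
    by_contra hcnt
    push_neg at hcnt
    have hpair : s ::ₘ s ::ₘ 0 ≤ Q := by
      rw [Multiset.le_iff_count]
      intro x
      by_cases hx : x = s
      · subst hx; simp; omega
      · simp [Multiset.count_cons_of_ne hx, Multiset.count_singleton, hx]
    have hsQ : s ∈ Q := Multiset.mem_of_le hpair (by simp)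
    obtain ⟨hs0, _⟩ := hQinv s hsQ
    have hsep := hQsep s s hpair
    rw [dist_self] at hsep
    have hk : 2 ≤ s.card + s.card := by
      have := Multiset.card_pos.mpr hs0
      omega
    exact absurd hsep (not_lt.mpr (hrule.d_pos hk).le)
  set L : List (Multiset V) := Q.toList with hL
  have hLnodup : L.Nodup := by
    rw [hL, ← Multiset.coe_nodup, Multiset.coe_toList]
    exact hnodup
  refine ⟨L.length, fun i => L.get i, ?_, ?_, ?_, ?_⟩
  · intro i
    have : L.get i ∈ Q := by
      rw [← Multiset.mem_toList]
      exact L.get_mem _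
    exact (hQinv _ this).1
  · have h1 : ∑ i : Fin L.length, L.get i = L.sum := by
      simp [Fin.sum_univ_getElem]
    rw [h1, hL]
    have : (Q.toList : Multiset (Multiset V)).sum = Q.sum := by
      rw [Multiset.coe_toList]
    rw [← Multiset.sum_coe, Multiset.coe_toList, hQsum, hPsum]
  · intro i p hp
    have : L.get i ∈ Q := by
      rw [← Multiset.mem_toList]
      exact L.get_mem _
    exact (hQinv _ this).2 p hp
  · intro i j hij
    have hne : L.get i ≠ L.get j := fun h => hij ((List.Nodup.get_inj_iff hLnodup).mp h)
    have hiQ : L.get i ∈ Q := by rw [← Multiset.mem_toList]; exact L.get_mem _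
    have hjQ : L.get j ∈ Q := by rw [← Multiset.mem_toList]; exact L.get_mem _
    have hpair : L.get i ::ₘ L.get j ::ₘ 0 ≤ Q := by
      have hj' : L.get j ∈ Q.erase (L.get i) :=
        (Multiset.mem_erase_of_ne (Ne.symm hne)).mpr hjQ
      have h1 : (L.get j ::ₘ 0 : Multiset (Multiset V)) ≤ Q.erase (L.get i) := by
        simpa using Multiset.singleton_le.mpr hj'
      calc L.get i ::ₘ L.get j ::ₘ 0 ≤ L.get i ::ₘ Q.erase (L.get i) :=
            Multiset.cons_le_cons _ h1
        _ = Q := Multiset.cons_erase hiQ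
    exact hQsep _ _ hpair
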